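/- arXiv:1102.3483 — 3 statements merged into one kernel-verified Lean document; each statement's English description precedes it below -/
import Mathlib

section
/- The 4-dimensional 0-Möbius cube 0-MQ_4 and the 4-dimensional locally twisted cube LTQ_4 are isomorphic as simple graphs. -/
/-- Vertices of the 3-dimensional cubes: binary strings `x1x2x3` of length 3. -/
abbrev Vtx3 := Bool × Bool × Bool

/-- The 12 edges of the 3-dimensional locally twisted cube `LTQ_3`. -/
def ltq3EdgeList : List (Vtx3 × Vtx3) :=
  [ ((false,false,false),(false,false,true)),
    ((false,false,true),(false,true,true)),
    ((false,true,true),(false,true,false)),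
    ((false,true,false),(false,false,false)),
    ((true,false,false),(true,false,true)),
    ((true,false,true),(true,true,true)),
    ((true,true,true),(true,true,false)),
    ((true,true,false),(true,false,false)),
    ((false,false,false),(true,false,false)),
    ((false,false,true),(true,true,true)),
    ((false,true,false),(true,true,false)),
    ((false,true,true),(true,false,true)) ]

/-- The 3-dimensional locally twisted cube `LTQ_3`. -/
def LTQ3 : SimpleGraph Vtx3 where
  Adj u v := (u, v) ∈ ltq3EdgeList ∨ (v, u) ∈ ltq3EdgeList
  symm := ⟨fun _ _ h => Or.symm h⟩
  loopless := by
    constructor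
    intro x
    revert x
    decide

instance : DecidableRel LTQ3.Adj :=
  fun u v => inferInstanceAs (Decidable ((u, v) ∈ ltq3EdgeList ∨ (v, u) ∈ ltq3EdgeList))

/-- Vertices of the 4-dimensional cubes: binary strings `x1x2x3x4` of length 4. -/
abbrev Vtx4 := Bool × Vtx3

/-- The twist map of the locally twisted cube:
`x2x3x4 ↦ (x2+x4)x3x4`, where `+` is addition mod 2. -/
def ltqTwist : Vtx3 → Vtx3
  | (x2, x3, x4) => (xor x2 x4, x3, x4)

/-- The 4-dimensional locally twisted cube `LTQ_4`: two copies of `LTQ_3`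
(prefixed with 0 resp. 1), and each `0x2x3x4` joined to `1(x2+x4)x3x4`. -/
def LTQ4 : SimpleGraph Vtx4 where
  Adj u v := (u.1 = v.1 ∧ LTQ3.Adj u.2 v.2)
    ∨ (u.1 = false ∧ v.1 = true ∧ v.2 = ltqTwist u.2)
    ∨ (u.1 = true ∧ v.1 = false ∧ u.2 = ltqTwist v.2)
  symm := by
    constructor
    rintro ⟨b1, x⟩ ⟨b2, y⟩ (⟨h1, h2⟩ | ⟨h1, h2, h3⟩ | ⟨h1, h2, h3⟩)
    · exact Or.inl ⟨h1.symm, h2.symm⟩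
    · exact Or.inr (Or.inr ⟨h2, h1, h3⟩)
    · exact Or.inr (Or.inl ⟨h2, h1, h3⟩)
  loopless := by
    constructor
    rintro ⟨b, x⟩ (⟨-, h⟩ | ⟨h1, h2, -⟩ | ⟨h1, h2, -⟩)
    · exact LTQ3.loopless.irrefl x h
    · subst h1; exact Bool.false_ne_true h2
    · subst h2; exact Bool.false_ne_true h1

/-- The list of the four Möbius neighbours `Y_1, …, Y_4` of a vertex `x1x2x3x4`
of the 4-dimensional Möbius cube with fixed bit `x0 = b`:
`Y_i` is obtained by complementing the bit `x_i` if `x_{i-1} = 0`, and by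
complementing all the bits `x_i, …, x_n` if `x_{i-1} = 1`. -/
def mq4Nbrs (b : Bool) : Vtx4 → List Vtx4
  | (x1, x2, x3, x4) =>
    [ if b then (!x1, !x2, !x3, !x4) else (!x1, x2, x3, x4),
      if x1 then (x1, !x2, !x3, !x4) else (x1, !x2, x3, x4),
      if x2 then (x1, x2, !x3, !x4) else (x1, x2, !x3, x4),
      if x3 then (x1, x2, x3, !x4) else (x1, x2, x3, !x4) ]

/-- The 4-dimensional Möbius cube with fixed bit `x0 = b`
(`0-MQ_4` for `b = false`, `1-MQ_4` for `b = true`). -/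
def MQ4 (b : Bool) : SimpleGraph Vtx4 where
  Adj u v := v ∈ mq4Nbrs b u ∨ u ∈ mq4Nbrs b v
  symm := ⟨fun _ _ h => Or.symm h⟩
  loopless := by
    constructor
    intro x
    cases b <;> revert x <;> decide

instance : DecidableRel LTQ4.Adj := fun u v =>
  inferInstanceAs (Decidable ((u.1 = v.1 ∧ LTQ3.Adj u.2 v.2)
    ∨ (u.1 = false ∧ v.1 = true ∧ v.2 = ltqTwist u.2)
    ∨ (u.1 = true ∧ v.1 = false ∧ u.2 = ltqTwist v.2)))

instance (b : Bool) : DecidableRel (MQ4 b).Adj := fun u v =>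
  inferInstanceAs (Decidable (v ∈ mq4Nbrs b u ∨ u ∈ mq4Nbrs b v))

def isoFun : Vtx4 → Vtx4
  | (false, false, false, false) => (false, false, false, true)
  | (false, false, false, true) => (false, false, true, true)
  | (false, false, true, false) => (false, true, true, true)
  | (false, false, true, true) => (false, true, false, true)
  | (false, true, false, false) => (false, false, false, false)
  | (false, true, false, true) => (false, false, true, false)
  | (false, true, true, false) => (false, true, true, false)
  | (false, true, true, true) => (false, true, false, false)
  | (true, false, false, false) => (true, true, false, true)
  | (true, false, false, true) => (true, true, true, true)
  | (true, false, true, false) => (true, false, true, true)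
  | (true, false, true, true) => (true, false, false, true)
  | (true, true, false, false) => (true, false, false, false)
  | (true, true, false, true) => (true, false, true, false)
  | (true, true, true, false) => (true, true, true, false)
  | (true, true, true, true) => (true, true, false, false)

def isoInv : Vtx4 → Vtx4
  | (false, false, false, true) => (false, false, false, false)
  | (false, false, true, true) => (false, false, false, true)
  | (false, true, true, true) => (false, false, true, false)
  | (false, true, false, true) => (false, false, true, true)
  | (false, false, false, false) => (false, true, false, false)
  | (false, false, true, false) => (false, true, false, true)
  | (false, true, true, false) => (false, true, true, false)
  | (false, true, false, false) => (false, true, true, true)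
  | (true, true, false, true) => (true, false, false, false)
  | (true, true, true, true) => (true, false, false, true)
  | (true, false, true, true) => (true, false, true, false)
  | (true, false, false, true) => (true, false, true, true)
  | (true, false, false, false) => (true, true, false, false)
  | (true, false, true, false) => (true, true, false, true)
  | (true, true, true, false) => (true, true, true, false)
  | (true, true, false, false) => (true, true, true, true)

/-- The 4-dimensional 0-Möbius cube `0-MQ_4` and the 4-dimensional locally
twisted cube `LTQ_4` are isomorphic as simple graphs. -/
theorem mq4_zero_iso_ltq4 : Nonempty (MQ4 false ≃g LTQ4) := by
  refine ⟨⟨⟨isoFun, isoInv, by decide, by decide⟩, ?_⟩⟩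
  show ∀ a b, LTQ4.Adj (isoFun a) (isoFun b) ↔ (MQ4 false).Adj a b
  decide
end

section
/- If X is a set of vertices of LTQ_3 such that ⟨X⟩ is isomorphic to C_4, then ⟨V(LTQ_3) \ X⟩ is also isomorphic to C_4, and there exists a matching of cardinality four between X and V(LTQ_3) \ X, i.e., four pairwise disjoint edges of LTQ_3 each joining a vertex of X to a vertex of V(LTQ_3) \ X. -/
set_option synthInstance.maxSize 2000 in
set_option maxHeartbeats 4000000 in
set_option maxRecDepth 10000 in
theorem ltq3_key : ∀ a b c d : Vtx3,
    (LTQ3.Adj a b ∧ LTQ3.Adj b c ∧ LTQ3.Adj c d ∧ LTQ3.Adj d a ∧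
      ¬ LTQ3.Adj a c ∧ ¬ LTQ3.Adj b d) →
    (a ≠ b ∧ a ≠ c ∧ a ≠ d ∧ b ≠ c ∧ b ≠ d ∧ c ≠ d) →
    ∃ a' b' c' d' : Vtx3,
      (LTQ3.Adj a' b' ∧ LTQ3.Adj b' c' ∧ LTQ3.Adj c' d' ∧ LTQ3.Adj d' a' ∧
        ¬ LTQ3.Adj a' c' ∧ ¬ LTQ3.Adj b' d') ∧
      (a' ≠ b' ∧ a' ≠ c' ∧ a' ≠ d' ∧ b' ≠ c' ∧ b' ≠ d' ∧ c' ≠ d') ∧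
      (∀ x : Vtx3, (x = a' ∨ x = b' ∨ x = c' ∨ x = d') ↔ ¬(x = a ∨ x = b ∨ x = c ∨ x = d)) ∧
      ∃ m0 m1 m2 m3 : Vtx3,
        (m0 ≠ m1 ∧ m0 ≠ m2 ∧ m0 ≠ m3 ∧ m1 ≠ m2 ∧ m1 ≠ m3 ∧ m2 ≠ m3) ∧
        (¬(m0 = a ∨ m0 = b ∨ m0 = c ∨ m0 = d)) ∧
        (¬(m1 = a ∨ m1 = b ∨ m1 = c ∨ m1 = d)) ∧
        (¬(m2 = a ∨ m2 = b ∨ m2 = c ∨ m2 = d)) ∧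
        (¬(m3 = a ∨ m3 = b ∨ m3 = c ∨ m3 = d)) ∧
        LTQ3.Adj a m0 ∧ LTQ3.Adj b m1 ∧ LTQ3.Adj c m2 ∧ LTQ3.Adj d m3 := by decide

/-- From an explicit 4-cycle build the graph isomorphism. -/
lemma ltq3_mk_iso (a b c d : Vtx3)
    (e1 : LTQ3.Adj a b) (e2 : LTQ3.Adj b c) (e3 : LTQ3.Adj c d) (e4 : LTQ3.Adj d a)
    (n1 : ¬ LTQ3.Adj a c) (n2 : ¬ LTQ3.Adj b d)
    (hab : a ≠ b) (hac : a ≠ c) (had : a ≠ d) (hbc : b ≠ c) (hbd : b ≠ d) (hcd : c ≠ d) :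
    Nonempty (LTQ3.induce {x | x = a ∨ x = b ∨ x = c ∨ x = d} ≃g SimpleGraph.cycleGraph 4) := by
  set S : Set Vtx3 := {x | x = a ∨ x = b ∨ x = c ∨ x = d} with hS
  have haS : a ∈ S := Or.inl rfl
  have hbS : b ∈ S := Or.inr (Or.inl rfl)
  have hcS : c ∈ S := Or.inr (Or.inr (Or.inl rfl))
  have hdS : d ∈ S := Or.inr (Or.inr (Or.inr rfl))
  let f : Fin 4 → S := fun i =>
    match i with
    | 0 => ⟨a, haS⟩
    | 1 => ⟨b, hbS⟩
    | 2 => ⟨c, hcS⟩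
    | 3 => ⟨d, hdS⟩
  have hinj : Function.Injective f := by
    intro i j hij
    have hv : (f i : Vtx3) = (f j : Vtx3) := congrArg Subtype.val hij
    fin_cases i <;> fin_cases j <;> simp_all [f]
  have hsurj : Function.Surjective f := by
    rintro ⟨x, hx⟩
    rcases hx with rfl | rfl | rfl | rfl
    exacts [⟨0, rfl⟩, ⟨1, rfl⟩, ⟨2, rfl⟩, ⟨3, rfl⟩]
  refine ⟨(RelIso.mk (Equiv.ofBijective f ⟨hinj, hsurj⟩) ?_).symm⟩
  intro i j
  fin_cases i <;> fin_cases j <;>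
    first
      | exact iff_of_false (LTQ3.irrefl) (by decide)
      | exact iff_of_true e1 (by decide)
      | exact iff_of_true e2 (by decide)
      | exact iff_of_true e3 (by decide)
      | exact iff_of_true e4 (by decide)
      | exact iff_of_true e1.symm (by decide)
      | exact iff_of_true e2.symm (by decide)
      | exact iff_of_true e3.symm (by decide)
      | exact iff_of_true e4.symm (by decide)
      | exact iff_of_false n1 (by decide)
      | exact iff_of_false n2 (by decide)
      | exact iff_of_false (fun h => n1 h.symm) (by decide)
      | exact iff_of_false (fun h => n2 h.symm) (by decide)

/-- If `X ⊆ V(LTQ_3)` induces a 4-cycle, then so does its complement, and there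
is a matching of cardinality four between `X` and its complement. -/
theorem ltq3_c4_complement (X : Set Vtx3)
    (h : Nonempty (LTQ3.induce X ≃g SimpleGraph.cycleGraph 4)) :
    Nonempty (LTQ3.induce Xᶜ ≃g SimpleGraph.cycleGraph 4) ∧
    ∃ e : Fin 4 → Vtx3 × Vtx3,
      (∀ i, (e i).1 ∈ X ∧ (e i).2 ∈ Xᶜ ∧ LTQ3.Adj (e i).1 (e i).2) ∧
      Function.Injective (fun i => (e i).1) ∧
      Function.Injective (fun i => (e i).2) := by
  obtain ⟨e⟩ := h
  set a : Vtx3 := (e.symm 0 : X).val with ha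
  set b : Vtx3 := (e.symm 1 : X).val with hb
  set c : Vtx3 := (e.symm 2 : X).val with hc
  set d : Vtx3 := (e.symm 3 : X).val with hd
  have hadj : ∀ i j : Fin 4,
      LTQ3.Adj (e.symm i : X).val (e.symm j : X).val ↔
        (SimpleGraph.cycleGraph 4).Adj i j :=
    fun i j => e.symm.map_adj_iff
  have hne : ∀ i j : Fin 4, i ≠ j →
      (e.symm i : X).val ≠ (e.symm j : X).val := by
    intro i j hij hv
    exact hij (e.symm.toEquiv.injective (Subtype.ext hv))
  have hmem : ∀ x : Vtx3, x ∈ X ↔ (x = a ∨ x = b ∨ x = c ∨ x = d) := by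
    intro x
    constructor
    · intro hx
      have hi : ∃ i : Fin 4, (e.symm i : X).val = x :=
        ⟨e ⟨x, hx⟩, congrArg Subtype.val (e.symm_apply_apply ⟨x, hx⟩)⟩
      obtain ⟨i, hi⟩ := hi
      fin_cases i
      · exact Or.inl hi.symm
      · exact Or.inr (Or.inl hi.symm)
      · exact Or.inr (Or.inr (Or.inl hi.symm))
      · exact Or.inr (Or.inr (Or.inr hi.symm))
    · rintro (rfl | rfl | rfl | rfl)
      exacts [(e.symm 0).2, (e.symm 1).2, (e.symm 2).2, (e.symm 3).2]
  obtain ⟨a', b', c', d', ⟨e1', e2', e3', e4', n1', n2'⟩,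
      ⟨h12, h13, h14, h23, h24, h34⟩, hcompl,
      m0, m1, m2, m3, ⟨hm01, hm02, hm03, hm12, hm13, hm23⟩,
      hm0, hm1, hm2, hm3, ha0, ha1, ha2, ha3⟩ :=
    ltq3_key a b c d
      ⟨(hadj 0 1).2 (by decide), (hadj 1 2).2 (by decide), (hadj 2 3).2 (by decide),
        (hadj 3 0).2 (by decide),
        fun hx => absurd ((hadj 0 2).1 hx) (by decide),
        fun hx => absurd ((hadj 1 3).1 hx) (by decide)⟩
      ⟨hne 0 1 (by decide), hne 0 2 (by decide), hne 0 3 (by decide),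
        hne 1 2 (by decide), hne 1 3 (by decide), hne 2 3 (by decide)⟩
  have hXc : Xᶜ = {x | x = a' ∨ x = b' ∨ x = c' ∨ x = d'} := by
    ext x
    simp only [Set.mem_compl_iff, Set.mem_setOf_eq, hcompl x, hmem x]
  constructor
  · rw [hXc]
    exact ltq3_mk_iso a' b' c' d' e1' e2' e3' e4' n1' n2' h12 h13 h14 h23 h24 h34
  · refine ⟨fun i => match i with
      | 0 => (a, m0) | 1 => (b, m1) | 2 => (c, m2) | 3 => (d, m3), ?_, ?_, ?_⟩
    · intro i
      fin_cases i
      · exact ⟨(hmem a).2 (Or.inl rfl), fun hx => hm0 ((hmem m0).1 hx), ha0⟩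
      · exact ⟨(hmem b).2 (Or.inr (Or.inl rfl)), fun hx => hm1 ((hmem m1).1 hx), ha1⟩
      · exact ⟨(hmem c).2 (Or.inr (Or.inr (Or.inl rfl))), fun hx => hm2 ((hmem m2).1 hx), ha2⟩
      · exact ⟨(hmem d).2 (Or.inr (Or.inr (Or.inr rfl))), fun hx => hm3 ((hmem m3).1 hx), ha3⟩
    · intro i j hij
      have h01 := hne 0 1 (by decide); have h02 := hne 0 2 (by decide)
      have h03 := hne 0 3 (by decide); have h12' := hne 1 2 (by decide)
      have h13' := hne 1 3 (by decide); have h23' := hne 2 3 (by decide)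
      fin_cases i <;> fin_cases j <;>
        first
          | rfl
          | exact absurd hij h01 | exact absurd hij h02 | exact absurd hij h03
          | exact absurd hij h12' | exact absurd hij h13' | exact absurd hij h23'
          | exact absurd hij (Ne.symm h01) | exact absurd hij (Ne.symm h02)
          | exact absurd hij (Ne.symm h03) | exact absurd hij (Ne.symm h12')
          | exact absurd hij (Ne.symm h13') | exact absurd hij (Ne.symm h23')
    · intro i j hij
      fin_cases i <;> fin_cases j <;>
        first
          | rfl
          | exact absurd hij hm01 | exact absurd hij hm02 | exact absurd hij hm03
          | exact absurd hij hm12 | exact absurd hij hm13 | exact absurd hij hm23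
          | exact absurd hij (Ne.symm hm01) | exact absurd hij (Ne.symm hm02)
          | exact absurd hij (Ne.symm hm03) | exact absurd hij (Ne.symm hm12)
          | exact absurd hij (Ne.symm hm13) | exact absurd hij (Ne.symm hm23)
end

section
/- Let u1, u2, u3, u4, u5 be distinct vertices in L (the set of vertices of LTQ_4 whose first bit is 0) such that ⟨{u1, u2, u3, u4, u5}⟩ is isomorphic to C_5. Then for every i in {1, ..., 5}, the set {π(u1), π(u2), π(u3), π(u4), π(u5)} \ {π(u_i)} does not induce a subgraph of LTQ_4 isomorphic to C_4. -/
/-- The map `π` sending a vertex `0x2x3x4` of the left copy `L` of `LTQ_3`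
inside `LTQ_4` to its unique neighbour `1(x2+x4)x3x4` in the right copy. -/
def pi4 : Vtx4 → Vtx4 := fun u => (true, ltqTwist u.2)

lemma ltq4_adj_iff (x y : Vtx4) : LTQ4.Adj x y ↔
    ((x.1 = y.1 ∧ LTQ3.Adj x.2 y.2)
    ∨ (x.1 = false ∧ y.1 = true ∧ y.2 = ltqTwist x.2)
    ∨ (x.1 = true ∧ y.1 = false ∧ x.2 = ltqTwist y.2)) := Iff.rfl

lemma ltqTwist_invol : ∀ x, ltqTwist (ltqTwist x) = x := by decide

lemma ltqTwist_inj : Function.Injective ltqTwist :=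
  Function.LeftInverse.injective ltqTwist_invol

lemma adj_same {x y : Vtx4} (hxy : x.1 = y.1) :
    LTQ4.Adj x y ↔ LTQ3.Adj x.2 y.2 := by
  rw [ltq4_adj_iff]
  constructor
  · rintro (⟨-, h⟩ | ⟨h1, h2, -⟩ | ⟨h1, h2, -⟩)
    · exact h
    · rw [h1, h2] at hxy; cases hxy
    · rw [h1, h2] at hxy; cases hxy
  · exact fun h => Or.inl ⟨hxy, h⟩

/-- Degree-two extraction from an isomorphism with a cycle graph. -/
lemma deg_two_of_iso_cycle {V : Type*} {G : SimpleGraph V} {S : Set V} {n : ℕ}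
    (e : G.induce S ≃g SimpleGraph.cycleGraph (n + 3)) (x : S) :
    Nat.card {y : S // G.Adj x.val y.val} = 2 := by
  have h1 : Nat.card ((G.induce S).neighborSet x)
      = Nat.card ((SimpleGraph.cycleGraph (n + 3)).neighborSet (e x)) :=
    Nat.card_congr (e.mapNeighborSet x)
  have h2 : Nat.card ((SimpleGraph.cycleGraph (n + 3)).neighborSet (e x)) = 2 := by
    rw [Nat.card_eq_fintype_card, SimpleGraph.card_neighborSet_eq_degree,
      SimpleGraph.cycleGraph_degree_three_le]
  rw [← h1] at h2
  rw [← h2]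
  exact Nat.card_congr (Equiv.subtypeEquivRight fun y => Iff.rfl)

set_option maxRecDepth 100000 in
lemma core : ∀ s : Finset Vtx3,
    (∀ a ∈ s, (s.filter (LTQ3.Adj a)).card = 2) →
    s.card = 5 →
    ∀ a ∈ s, ¬ (∀ b ∈ (s.image ltqTwist).erase (ltqTwist a),
      (((s.image ltqTwist).erase (ltqTwist a)).filter (LTQ3.Adj b)).card = 2) := by
  decide
/-- If `u 0, …, u 4` are distinct vertices of the left copy `L` of `LTQ_3` in
`LTQ_4` inducing a `C_5`, then for every `i` the set
`{π(u 0), …, π(u 4)} \ {π(u i)}` does not induce a `C_4` in `LTQ_4`. -/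
theorem ltq4_c5_image (u : Fin 5 → Vtx4) (hinj : Function.Injective u)
    (hL : ∀ i, (u i).1 = false)
    (hC5 : Nonempty (LTQ4.induce (Set.range u) ≃g SimpleGraph.cycleGraph 5)) :
    ∀ i : Fin 5,
      ¬Nonempty (LTQ4.induce ((Set.range fun j => pi4 (u j)) \ {pi4 (u i)}) ≃g
        SimpleGraph.cycleGraph 4) := by
  intro i hne
  obtain ⟨e5⟩ := hC5
  obtain ⟨e4⟩ := hne
  set v : Fin 5 → Vtx3 := fun j => (u j).2 with hv
  have hu : ∀ j, u j = (false, v j) := fun j => Prod.ext (hL j) rfl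
  have hvinj : Function.Injective v := fun a b h => hinj (by rw [hu a, hu b, h])
  have hwinj : Function.Injective (fun j => pi4 (u j)) := by
    intro a b h
    simp only [pi4, Prod.mk.injEq] at h
    exact hvinj (ltqTwist_inj h.2)
  -- C5 degrees
  have hdeg5 : ∀ j, Nat.card {k : Fin 5 // LTQ4.Adj (u j) (u k)} = 2 := by
    intro j
    have h2 := deg_two_of_iso_cycle (n := 2) e5 ⟨u j, ⟨j, rfl⟩⟩
    rw [← h2]
    refine Nat.card_congr (Equiv.subtypeEquiv (Equiv.ofInjective u hinj) fun k => ?_)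
    rw [Equiv.ofInjective_apply]
  have hdeg5' : ∀ j, (Finset.univ.filter fun k => LTQ3.Adj (v j) (v k)).card = 2 := by
    intro j
    rw [← Fintype.card_subtype, ← Nat.card_eq_fintype_card, ← hdeg5 j]
    exact Nat.card_congr (Equiv.subtypeEquivRight fun k => (adj_same (by rw [hL j, hL k])).symm)
  -- C4 degrees
  have hmem : ∀ j : Fin 5, j ≠ i →
      pi4 (u j) ∈ (Set.range fun j => pi4 (u j)) \ {pi4 (u i)} := by
    intro j hj
    exact ⟨⟨j, rfl⟩, fun h => hj (hwinj h)⟩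
  obtain ⟨E', hE'⟩ : ∃ E : {k : Fin 5 // k ≠ i} ≃
      ((Set.range fun j => pi4 (u j)) \ {pi4 (u i)} : Set Vtx4),
      ∀ k, (E k).val = pi4 (u k.val) := by
    refine ⟨Equiv.ofBijective (fun k => ⟨pi4 (u k.val), hmem k.val k.2⟩) ⟨?_, ?_⟩,
      fun k => rfl⟩
    · intro a b h
      exact Subtype.ext (hwinj (Subtype.ext_iff.1 h))
    · rintro ⟨y, ⟨k, rfl⟩, hy⟩
      exact ⟨⟨k, fun h => hy (by rw [h]; rfl)⟩, rfl⟩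
  have hdeg4 : ∀ j, j ≠ i →
      Nat.card {k : Fin 5 // k ≠ i ∧ LTQ4.Adj (pi4 (u j)) (pi4 (u k))} = 2 := by
    intro j hj
    have h2 := deg_two_of_iso_cycle (n := 1) e4 ⟨pi4 (u j), hmem j hj⟩
    rw [← h2]
    refine Nat.card_congr (((Equiv.subtypeSubtypeEquivSubtypeInter _ _).symm).trans
      (Equiv.subtypeEquiv E' fun k => by rw [hE']))
  have hdeg4' : ∀ j, j ≠ i →
      (Finset.univ.filter fun k => k ≠ i ∧
        LTQ3.Adj (ltqTwist (v j)) (ltqTwist (v k))).card = 2 := by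
    intro j hj
    rw [← Fintype.card_subtype, ← Nat.card_eq_fintype_card, ← hdeg4 j hj]
    exact Nat.card_congr (Equiv.subtypeEquivRight fun k =>
      and_congr_right fun _ =>
        (adj_same (x := pi4 (u j)) (y := pi4 (u k)) rfl).symm)
  -- assemble Finset facts and contradict `core`
  set s : Finset Vtx3 := Finset.univ.image v with hsdef
  have hscard : s.card = 5 := by
    rw [hsdef, Finset.card_image_of_injective _ hvinj, Finset.card_univ, Fintype.card_fin]
  have hs2 : ∀ a ∈ s, (s.filter (LTQ3.Adj a)).card = 2 := by
    intro a ha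
    obtain ⟨j, -, rfl⟩ := Finset.mem_image.1 ha
    rw [hsdef, Finset.filter_image, Finset.card_image_of_injective _ hvinj]
    exact hdeg5' j
  refine core s hs2 hscard (v i) (Finset.mem_image.2 ⟨i, Finset.mem_univ i, rfl⟩) ?_
  intro b hb
  have himg : s.image ltqTwist = Finset.univ.image fun j => ltqTwist (v j) := by
    rw [hsdef, Finset.image_image]; rfl
  have htwinj : Function.Injective fun j => ltqTwist (v j) :=
    fun a b h => hvinj (ltqTwist_inj h)
  have ht : (s.image ltqTwist).erase (ltqTwist (v i))
      = (Finset.univ.erase i).image fun j => ltqTwist (v j) := by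
    rw [himg, ← Finset.image_erase htwinj]
  rw [ht] at hb ⊢
  obtain ⟨j, hj, rfl⟩ := Finset.mem_image.1 hb
  have hj' : j ≠ i := (Finset.mem_erase.1 hj).1
  rw [Finset.filter_image, Finset.card_image_of_injective _ htwinj,
    ← Finset.filter_ne' Finset.univ i, Finset.filter_filter]
  exact hdeg4' j hj'
end
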